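/- Let C be a reduced bigraded complex over F[U,V] with basis B, and let a, b, c ∈ B satisfy ⟨∂b, Ua⟩ = 1 and ⟨∂c, Vb⟩ = 1. Assume moreover that for all y ∈ B and k ≥ 1, if ⟨∂c, V^k y⟩ ≠ 0 then (k,y) = (1,b), and if ⟨∂y, U^k a⟩ ≠ 0 then (k,y) = (1,b). Then there exists d ∈ B with ⟨∂c, Ud⟩ = 1 and ⟨∂d, Va⟩ = 1, so that a, b, c, d form a square. -/
import Mathlib


open Finset

/-- Bigraded data over `𝔽 = ℤ/2ℤ`: a finite basis `B`, a bigrading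
`(grU, grV)`, and a "differential" recorded via its coefficients
`d x y a b = ⟨∂x, U^a V^b y⟩ ∈ 𝔽`.  A bigraded complex over `𝔽[U,V]`
(resp. over `R = 𝔽[U,V]/(UV)`) is such a datum satisfying the predicate
`IsComplexPoly` (resp. `IsComplexR`) below. -/
structure GCx where
  B : Type
  fin : Fintype B
  grU : B → ℤ
  grV : B → ℤ
  d : B → B → ℕ → ℕ → ZMod 2

attribute [instance] GCx.fin

namespace GCx

/-- The bidegree `(−1,−1)` condition on the differential. -/
def Bidegree (C : GCx) : Prop :=
  ∀ (x y : C.B) (a b : ℕ), C.d x y a b ≠ 0 →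
    C.grU y - 2 * (a : ℤ) = C.grU x - 1 ∧ C.grV y - 2 * (b : ℤ) = C.grV x - 1

/-- Coefficients of the composite of two `𝔽[U,V]`-linear maps recorded via
their coefficient matrices (a Cauchy product). -/
def conv {B₁ B₂ B₃ : Type} [Fintype B₂]
    (f : B₁ → B₂ → ℕ → ℕ → ZMod 2) (g : B₂ → B₃ → ℕ → ℕ → ZMod 2) :
    B₁ → B₃ → ℕ → ℕ → ZMod 2 := fun x z a b =>
  ∑ y : B₂, ∑ a₁ ∈ Finset.range (a + 1), ∑ b₁ ∈ Finset.range (b + 1),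
    f x y a₁ b₁ * g y z (a - a₁) (b - b₁)

/-- `C` is a bigraded complex over `𝔽[U,V]`: bidegree condition plus `∂ ∘ ∂ = 0`. -/
def IsComplexPoly (C : GCx) : Prop :=
  C.Bidegree ∧ ∀ (x z : C.B) (a b : ℕ), conv C.d C.d x z a b = 0

/-- Supported away from the ideal `(UV)`: the coefficient matrix of an object
over `R = 𝔽[U,V]/(UV)`. -/
def SuppR {B₁ B₂ : Type} (f : B₁ → B₂ → ℕ → ℕ → ZMod 2) : Prop :=
  ∀ x y a b, 0 < a → 0 < b → f x y a b = 0

/-- `C` is a bigraded complex over `R = 𝔽[U,V]/(UV)`: the differential only has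
monomials `U^a V^b` with `min a b = 0`, and `∂ ∘ ∂ = 0` holds for all
coefficients of monomials surviving in `R`. -/
def IsComplexR (C : GCx) : Prop :=
  C.Bidegree ∧ SuppR C.d ∧
    ∀ (x z : C.B) (a b : ℕ), a = 0 ∨ b = 0 → conv C.d C.d x z a b = 0

/-- The complex is reduced: no constant components in `∂`. -/
def Reduced (C : GCx) : Prop := ∀ x y : C.B, C.d x y 0 0 = 0

/-- `σ(x) = grU(x) + grV(x)`. -/
def σ (C : GCx) (x : C.B) : ℤ := C.grU x + C.grV x

/-- The width `w(C) = (max σ − min σ)/2 + 1` (as a rational number). -/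
noncomputable def width (C : GCx) [Nonempty C.B] : ℚ :=
  ((univ.sup' univ_nonempty C.σ - univ.inf' univ_nonempty C.σ : ℤ) : ℚ) / 2 + 1

/-- The reduction `C ⊗ R`: kill all coefficients of monomials in `(UV)`. -/
def reduce (C : GCx) : GCx where
  B := C.B
  fin := C.fin
  grU := C.grU
  grV := C.grV
  d := fun x y a b => if 0 < a ∧ 0 < b then 0 else C.d x y a b

/-- Direct sum of two bigraded data. -/
def dsum (C C' : GCx) : GCx where
  B := C.B ⊕ C'.B
  fin := inferInstance
  grU := Sum.elim C.grU C'.grU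
  grV := Sum.elim C.grV C'.grV
  d := fun x y a b =>
    match x, y with
    | Sum.inl x, Sum.inl y => C.d x y a b
    | Sum.inr x, Sum.inr y => C'.d x y a b
    | _, _ => 0

/-- Direct sum of a finite family of bigraded data. -/
def famSum {k : ℕ} (L : Fin k → GCx) : GCx where
  B := Σ i, (L i).B
  fin := inferInstance
  grU := fun x => (L x.1).grU x.2
  grV := fun x => (L x.1).grV x.2
  d := fun x y a b =>
    if h : x.1 = y.1 then
      (L y.1).d (cast (congrArg (fun i => (L i).B) h) x.2) y.2 a b
    else 0

open Classical in
/-- Coefficients of the identity map. -/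
noncomputable def delta (C : GCx) : C.B → C.B → ℕ → ℕ → ZMod 2 :=
  fun x y a b => if x = y ∧ a = 0 ∧ b = 0 then 1 else 0

/-- A grading-preserving map recorded by its coefficients. -/
def GradedHom (C C' : GCx) (φ : C.B → C'.B → ℕ → ℕ → ZMod 2) : Prop :=
  ∀ (x : C.B) (y : C'.B) (a b : ℕ), φ x y a b ≠ 0 →
    C'.grU y - 2 * (a : ℤ) = C.grU x ∧ C'.grV y - 2 * (b : ℤ) = C.grV x

/-- Isomorphism of bigraded complexes over `𝔽[U,V]`: a grading-preserving
module isomorphism commuting with the differentials. -/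
def IsoPoly (C C' : GCx) : Prop :=
  ∃ (φ : C.B → C'.B → ℕ → ℕ → ZMod 2) (ψ : C'.B → C.B → ℕ → ℕ → ZMod 2),
    GradedHom C C' φ ∧ GradedHom C' C ψ ∧
    (∀ x z a b, conv C.d φ x z a b = conv φ C'.d x z a b) ∧
    (∀ x z a b, conv C'.d ψ x z a b = conv ψ C.d x z a b) ∧
    (∀ x z a b, conv φ ψ x z a b = delta C x z a b) ∧
    (∀ x z a b, conv ψ φ x z a b = delta C' x z a b)

/-- Isomorphism of bigraded complexes over `R = 𝔽[U,V]/(UV)`: all identities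
are required on the coefficients of the monomials `U^a V^b`, `min a b = 0`,
surviving in `R`. -/
def IsoR (C C' : GCx) : Prop :=
  ∃ (φ : C.B → C'.B → ℕ → ℕ → ZMod 2) (ψ : C'.B → C.B → ℕ → ℕ → ZMod 2),
    SuppR φ ∧ SuppR ψ ∧ GradedHom C C' φ ∧ GradedHom C' C ψ ∧
    (∀ x z a b, a = 0 ∨ b = 0 → conv C.d φ x z a b = conv φ C'.d x z a b) ∧
    (∀ x z a b, a = 0 ∨ b = 0 → conv C'.d ψ x z a b = conv ψ C.d x z a b) ∧
    (∀ x z a b, a = 0 ∨ b = 0 → conv φ ψ x z a b = delta C x z a b) ∧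
    (∀ x z a b, a = 0 ∨ b = 0 → conv ψ φ x z a b = delta C' x z a b)

/-- The square `K₁(p,q)`: basis `a,b,c,d = 0,1,2,3`, differential
`∂a = Ub + Vc`, `∂b = Vd`, `∂c = Ud`, `∂d = 0`. -/
def K1 (p q : ℤ) : GCx where
  B := Fin 4
  fin := inferInstance
  grU := ![p, p + 1, p - 1, p]
  grV := ![q, q - 1, q + 1, q]
  d := fun x y a b =>
    if (x = 0 ∧ y = 1 ∧ a = 1 ∧ b = 0) ∨ (x = 0 ∧ y = 2 ∧ a = 0 ∧ b = 1) ∨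
       (x = 1 ∧ y = 3 ∧ a = 0 ∧ b = 1) ∨ (x = 2 ∧ y = 3 ∧ a = 1 ∧ b = 0)
    then 1 else 0

/-- The special shape `K₀(p,q)`: basis `a,b,c,d,e,f = 0,1,2,3,4,5`,
differential `∂a = Vf`, `∂b = U²a + UVe`, `∂c = Ud + Vb`, `∂d = V²e + UVa`,
`∂e = Uf`, `∂f = 0`. -/
def K0 (p q : ℤ) : GCx where
  B := Fin 6
  fin := inferInstance
  grU := ![p, p - 3, p - 2, p - 1, p - 2, p - 1]
  grV := ![q, q + 1, q, q - 1, q + 2, q + 1]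
  d := fun x y a b =>
    if (x = 0 ∧ y = 5 ∧ a = 0 ∧ b = 1) ∨
       (x = 1 ∧ y = 0 ∧ a = 2 ∧ b = 0) ∨ (x = 1 ∧ y = 4 ∧ a = 1 ∧ b = 1) ∨
       (x = 2 ∧ y = 3 ∧ a = 1 ∧ b = 0) ∨ (x = 2 ∧ y = 1 ∧ a = 0 ∧ b = 1) ∨
       (x = 3 ∧ y = 4 ∧ a = 0 ∧ b = 2) ∨ (x = 3 ∧ y = 0 ∧ a = 1 ∧ b = 1) ∨
       (x = 4 ∧ y = 5 ∧ a = 1 ∧ b = 0)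
    then 1 else 0

/-- `S` is, up to an overall shift of both gradings, a standard complex
`C(a₁, …, a_{2n})` over `R`: there is a basis `x₀,…,x_{2n}` such that the
only nonzero components of `∂` are, for each `1 ≤ i ≤ 2n`, a single arrow
joining `x_{i−1}` and `x_i`, horizontal (a power of `U`) for odd `i` and
vertical (a power of `V`) for even `i`, with length `|a_i|` and direction
determined by the sign of `a_i`.  (Gradings satisfying the bidegree condition
are determined by these data up to an overall shift.) -/
def IsStandardUpToShift (S : GCx) : Prop :=
  SuppR S.d ∧ S.Bidegree ∧
  ∃ (n : ℕ) (A : Fin (2 * n) → ℤ) (e : Fin (2 * n + 1) ≃ S.B),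
    (∀ j, A j ≠ 0) ∧
    ∀ (x y : Fin (2 * n + 1)) (u v : ℕ),
      S.d (e x) (e y) u v ≠ 0 ↔
        ∃ j : Fin (2 * n),
          ((j : ℕ) % 2 = 0 ∧ v = 0 ∧
            ((0 < A j ∧ x = j.succ ∧ y = j.castSucc ∧ (u : ℤ) = A j) ∨
             (A j < 0 ∧ x = j.castSucc ∧ y = j.succ ∧ (u : ℤ) = -A j))) ∨
          ((j : ℕ) % 2 = 1 ∧ u = 0 ∧
            ((0 < A j ∧ x = j.succ ∧ y = j.castSucc ∧ (v : ℤ) = A j) ∨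
             (A j < 0 ∧ x = j.castSucc ∧ y = j.succ ∧ (v : ℤ) = -A j)))

/-- `L` is, up to an overall shift of both gradings, a closed width-2
staircase over `R`: a cyclic basis `y₁, …, y_{2m}` (`m ≥ 2`, indices mod
`2m`), exponents `cᵢ ∈ {1,2}` exactly two of which equal `2`, such that the
only nonzero components of `∂` are one arrow `U^{cᵢ}` joining `yᵢ` and
`y_{i+1}` for each odd `i` and one arrow `V^{cᵢ}` joining them for each even
`i` (in exactly one of the two possible directions each). -/
def IsStaircaseUpToShift (L : GCx) : Prop :=
  SuppR L.d ∧ L.Bidegree ∧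
  ∃ (m : ℕ) (hm : 2 ≤ m),
    let next : Fin (2 * m) → Fin (2 * m) :=
      fun i => ⟨((i : ℕ) + 1) % (2 * m), Nat.mod_lt _ (by omega)⟩
    ∃ (c : Fin (2 * m) → ℕ) (dir : Fin (2 * m) → Bool) (e : Fin (2 * m) ≃ L.B),
      (∀ i, c i = 1 ∨ c i = 2) ∧
      ((univ.filter fun i => c i = 2).card = 2) ∧
      ∀ (x y : Fin (2 * m)) (u v : ℕ),
        L.d (e x) (e y) u v ≠ 0 ↔
          ∃ i : Fin (2 * m),
            (if dir i then x = i ∧ y = next i else x = next i ∧ y = i) ∧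
            (if (i : ℕ) % 2 = 0 then u = c i ∧ v = 0 else u = 0 ∧ v = c i)

/-- The (distinguished) basis of `C` is simultaneously horizontally and
vertically simplified: each basis element has at most one outgoing horizontal,
outgoing vertical, incoming horizontal, and incoming vertical component. -/
def Simplified (C : GCx) : Prop :=
  (∀ (x y₁ y₂ : C.B) (k₁ k₂ : ℕ), 1 ≤ k₁ → 1 ≤ k₂ →
    C.d x y₁ k₁ 0 ≠ 0 → C.d x y₂ k₂ 0 ≠ 0 → y₁ = y₂ ∧ k₁ = k₂) ∧
  (∀ (x y₁ y₂ : C.B) (k₁ k₂ : ℕ), 1 ≤ k₁ → 1 ≤ k₂ →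
    C.d x y₁ 0 k₁ ≠ 0 → C.d x y₂ 0 k₂ ≠ 0 → y₁ = y₂ ∧ k₁ = k₂) ∧
  (∀ (x y₁ y₂ : C.B) (k₁ k₂ : ℕ), 1 ≤ k₁ → 1 ≤ k₂ →
    C.d y₁ x k₁ 0 ≠ 0 → C.d y₂ x k₂ 0 ≠ 0 → y₁ = y₂ ∧ k₁ = k₂) ∧
  (∀ (x y₁ y₂ : C.B) (k₁ k₂ : ℕ), 1 ≤ k₁ → 1 ≤ k₂ →
    C.d y₁ x 0 k₁ ≠ 0 → C.d y₂ x 0 k₂ ≠ 0 → y₁ = y₂ ∧ k₁ = k₂)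

end GCx
open GCx in
/-- If `⟨∂b, Ua⟩ = 1` and `⟨∂c, Vb⟩ = 1`, and `b` (with
length 1) accounts for the only vertical component out of `c` and the only
horizontal component into `a`, then `a, b, c` complete to a square: there is
`d` with `⟨∂c, Ud⟩ = 1` and `⟨∂d, Va⟩ = 1`. -/
theorem completes_to_square
    (C : GCx) (hC : C.IsComplexPoly) (hCred : C.Reduced) (a b c : C.B)
    (hba : C.d b a 1 0 = 1) (hcb : C.d c b 0 1 = 1)
    (hVout : ∀ (y : C.B) (k : ℕ), 1 ≤ k → C.d c y 0 k ≠ 0 → k = 1 ∧ y = b)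
    (hUin : ∀ (y : C.B) (k : ℕ), 1 ≤ k → C.d y a k 0 ≠ 0 → k = 1 ∧ y = b) :
    ∃ d : C.B, C.d c d 1 0 = 1 ∧ C.d d a 0 1 = 1 := by
  have key := hC.2 c a 1 1
  unfold GCx.conv at key
  have hone : ∀ x : ZMod 2, x ≠ 0 → x = 1 := by decide
  simp only [Finset.sum_range_succ, Finset.sum_range_zero, zero_add,
    Nat.sub_self, Nat.sub_zero] at key
  -- key : ∑ y, (d c y 0 0 * d y a 1 1 + d c y 0 1 * d y a 1 0 +
  --             (d c y 1 0 * d y a 0 1 + d c y 1 1 * d y a 0 0)) = 0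
  have hsplit : ∀ y : C.B,
      C.d c y 0 0 * C.d y a 1 1 + C.d c y 0 1 * C.d y a 1 0 +
        (C.d c y 1 0 * C.d y a 0 1 + C.d c y 1 1 * C.d y a 0 0)
      = C.d c y 0 1 * C.d y a 1 0 + C.d c y 1 0 * C.d y a 0 1 := by
    intro y
    rw [hCred c y, hCred y a]
    ring
  rw [Finset.sum_congr rfl (fun y _ => hsplit y), Finset.sum_add_distrib] at key
  have h1 : (∑ y : C.B, C.d c y 0 1 * C.d y a 1 0) = 1 := by
    rw [Finset.sum_eq_single b]
    · rw [hcb, hba]; ring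
    · intro y _ hy
      by_cases h : C.d c y 0 1 = 0
      · rw [h]; ring
      · exact absurd ((hVout y 1 le_rfl h).2) hy
    · intro h; exact absurd (Finset.mem_univ b) h
  rw [h1] at key
  have h2 : (∑ y : C.B, C.d c y 1 0 * C.d y a 0 1) ≠ 0 := by
    intro h; rw [h] at key; revert key; decide
  obtain ⟨d, -, hd⟩ := Finset.exists_ne_zero_of_sum_ne_zero h2
  refine ⟨d, hone _ (fun h => hd (by rw [h]; ring)), hone _ (fun h => hd (by rw [h]; ring))⟩
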